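/- Assume n is even, n ≥ 2, and a^2 ≠ c^2. Then for every nonzero α ∈ F_{q^2}, the number of X ∈ F_{q^2} with f(X) = α is either 0 or 𝔤(n). -/

import Mathlib

/-- `n` even, `n ≥ 2`, `a² ≠ c²`. For every nonzero `α`, the number of `X`
with `f(X) = α` is either `0` or `𝔤(n)`. -/
theorem stmt_9 (p s q : ℕ) (hp : p.Prime) (hpodd : p ≠ 2) (hs : 0 < s) (hq : q = p ^ s)
    (F : Type*) [Field F] [Fintype F] (hF : Fintype.card F = q ^ 2)
    (a c : F) (ha : a ^ q = a) (hc : c ^ q = c)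
    (n : ℕ) (hn2 : 2 ≤ n) (hneven : Even n)
    (hac : a ^ 2 ≠ c ^ 2)
    (f : F → F) (hf : ∀ X, f X = (c * X ^ q + a * X) * (X ^ q - X) ^ (n - 1)) :
    ∀ α : F, α ≠ 0 →
      (f ⁻¹' {α}).ncard = 0 ∨ (f ⁻¹' {α}).ncard = Nat.gcd n (q - 1) := by
  haveI hpfact : Fact p.Prime := ⟨hp⟩
  have hq1 : 1 ≤ q := by rw [hq]; exact Nat.one_le_pow _ _ hp.pos
  have hq2 : 2 ≤ q := by
    rw [hq]
    calc 2 ≤ p := hp.two_le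
      _ = p ^ 1 := (pow_one p).symm
      _ ≤ p ^ s := Nat.pow_le_pow_right hp.pos hs
  -- characteristic
  have hchar : ringChar F = p := by
    obtain ⟨m, hm, hcard⟩ := FiniteField.card F (ringChar F)
    have hdvd : p ∣ (ringChar F) ^ (m : ℕ) := by
      rw [← hcard, hF, hq, ← pow_mul]
      exact dvd_pow_self p (by positivity)
    have := hp.dvd_of_dvd_pow hdvd
    exact ((Nat.prime_dvd_prime_iff_eq hp hm).1 this).symm
  haveI hcharF : CharP F p := hchar ▸ ringChar.charP F
  have two_ne : (2 : F) ≠ 0 := by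
    intro h
    have h2 : ((2 : ℕ) : F) = 0 := by exact_mod_cast h
    have := (CharP.cast_eq_zero_iff F p 2).1 h2
    exact hpodd ((Nat.prime_dvd_prime_iff_eq hp Nat.prime_two).1 this)
  -- Frobenius facts
  have hFq : ∀ x : F, x ^ q ^ 2 = x := by
    intro x; rw [← hF]; exact FiniteField.pow_card x
  have hqq : ∀ x : F, (x ^ q) ^ q = x := by
    intro x; rw [← pow_mul, ← sq]; exact hFq x
  have haddq : ∀ x y : F, (x + y) ^ q = x ^ q + y ^ q := by
    intro x y; rw [hq]; exact add_pow_char_pow x y p s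
  have hsubq : ∀ x y : F, (x - y) ^ q = x ^ q - y ^ q := by
    intro x y; rw [hq]; exact sub_pow_char_pow x y s
  have hTq : ∀ X : F, (X ^ q - X) ^ q = -(X ^ q - X) := by
    intro X; rw [hsubq, hqq]; ring
  have hodd : Odd (n - 1) := Nat.Even.sub_odd (by omega) hneven odd_one
  have hn1 : n - 1 + 1 = n := by omega
  have hca : c - a ≠ 0 := by
    intro h; rw [sub_eq_zero] at h; exact hac (by rw [h])
  have hcpa : c + a ≠ 0 := by
    intro h
    have : c = -a := by linear_combination h
    exact hac (by rw [this]; ring)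
  set d := Nat.gcd n (q - 1) with hd
  have hd0 : 0 < d := Nat.gcd_pos_of_pos_left _ (by omega)
  intro α hα
  by_cases hne : (f ⁻¹' {α}).Nonempty
  swap
  · left; rw [Set.not_nonempty_iff_eq_empty] at hne; simp [hne]
  right
  obtain ⟨X₀, hX₀⟩ := hne
  have hfX₀ : f X₀ = α := hX₀
  -- key computation for any element of the fiber
  have hK : ∀ X : F, f X = α →
      (α + α ^ q = (c - a) * (X ^ q - X) ^ n ∧
       α - α ^ q = (c + a) * ((X ^ q + X) * (X ^ q - X) ^ (n - 1)) ∧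
       X ^ q - X ≠ 0) := by
    intro X hX
    have hT0 : X ^ q - X ≠ 0 := by
      intro h
      exact hα (by rw [← hX, hf, h, zero_pow (by omega), mul_zero])
    have hαq : α ^ q = -((c * X + a * X ^ q) * (X ^ q - X) ^ (n - 1)) := by
      calc α ^ q = ((c * X ^ q + a * X) * (X ^ q - X) ^ (n - 1)) ^ q := by
            rw [← hX, hf]
        _ = (c * X ^ q + a * X) ^ q * ((X ^ q - X) ^ (n - 1)) ^ q := mul_pow _ _ _
        _ = (c * X + a * X ^ q) * ((X ^ q - X) ^ q) ^ (n - 1) := by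
            rw [haddq, mul_pow, mul_pow, hc, ha, hqq, ← pow_mul, mul_comm (n - 1) q, pow_mul]
        _ = -((c * X + a * X ^ q) * (X ^ q - X) ^ (n - 1)) := by
            rw [hTq, hodd.neg_pow]; ring
    refine ⟨?_, ?_, hT0⟩
    · have hpow : (X ^ q - X) ^ n = (X ^ q - X) ^ (n - 1) * (X ^ q - X) := by
        rw [← pow_succ, hn1]
      rw [hαq, ← hX, hf, hpow]; ring
    · rw [hαq, ← hX, hf]; ring
  obtain ⟨f1, f2, hTX⟩ := hK X₀ hfX₀
  have hX₀ne : X₀ ≠ 0 := by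
    intro h
    apply hTX
    rw [h, zero_pow (by omega), sub_zero]
  -- the fiber is the orbit of X₀ under d-th roots of unity
  have hset : f ⁻¹' {α} = (fun l : F => l * X₀) '' {l : F | l ^ d = 1} := by
    ext Y
    simp only [Set.mem_preimage, Set.mem_singleton_iff, Set.mem_image, Set.mem_setOf_eq]
    constructor
    · intro hY
      obtain ⟨e1, e2, hTY⟩ := hK Y hY
      have hTn : (Y ^ q - Y) ^ n = (X₀ ^ q - X₀) ^ n :=
        mul_left_cancel₀ hca (by linear_combination f1 - e1)
      have hS : (Y ^ q + Y) * (Y ^ q - Y) ^ (n - 1)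
          = (X₀ ^ q + X₀) * (X₀ ^ q - X₀) ^ (n - 1) :=
        mul_left_cancel₀ hcpa (by linear_combination f2 - e2)
      set l : F := (Y ^ q - Y) * (X₀ ^ q - X₀)⁻¹ with hl
      have hl0 : l ≠ 0 := mul_ne_zero hTY (inv_ne_zero hTX)
      have hlq : l ^ q = l := by
        rw [hl, mul_pow, inv_pow, hTq, hTq, ← neg_inv]
        ring
      have hlq1 : l ^ (q - 1) = 1 := by
        apply mul_right_cancel₀ hl0
        rw [← pow_succ, show q - 1 + 1 = q by omega, hlq, one_mul]
      have hln : l ^ n = 1 := by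
        rw [hl, mul_pow, inv_pow, hTn, mul_inv_cancel₀ (pow_ne_zero _ hTX)]
      have hld : l ^ d = 1 := by
        refine orderOf_dvd_iff_pow_eq_one.1 (Nat.dvd_gcd ?_ ?_)
        · exact orderOf_dvd_of_pow_eq_one hln
        · exact orderOf_dvd_of_pow_eq_one hlq1
      refine ⟨l, hld, ?_⟩
      -- Y = l * X₀
      have hST : (Y ^ q + Y) * (X₀ ^ q - X₀) = (X₀ ^ q + X₀) * (Y ^ q - Y) := by
        apply mul_right_cancel₀ (pow_ne_zero (n - 1) hTX)
        have hTXn : (X₀ ^ q - X₀) ^ (n - 1) * (X₀ ^ q - X₀) = (X₀ ^ q - X₀) ^ n := by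
          rw [← pow_succ, hn1]
        have hTYn : (Y ^ q - Y) ^ (n - 1) * (Y ^ q - Y) = (Y ^ q - Y) ^ n := by
          rw [← pow_succ, hn1]
        calc (Y ^ q + Y) * (X₀ ^ q - X₀) * (X₀ ^ q - X₀) ^ (n - 1)
            = (Y ^ q + Y) * (X₀ ^ q - X₀) ^ n := by rw [← hTXn]; ring
          _ = (Y ^ q + Y) * (Y ^ q - Y) ^ n := by rw [hTn]
          _ = ((Y ^ q + Y) * (Y ^ q - Y) ^ (n - 1)) * (Y ^ q - Y) := by
              rw [mul_assoc, hTYn]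
          _ = ((X₀ ^ q + X₀) * (X₀ ^ q - X₀) ^ (n - 1)) * (Y ^ q - Y) := by rw [hS]
          _ = (X₀ ^ q + X₀) * (Y ^ q - Y) * (X₀ ^ q - X₀) ^ (n - 1) := by ring
      -- from the Frobenius: 2Y = S_Y - T_Y, 2X₀ = S_X - T_X
      have hkey : Y * (X₀ ^ q - X₀) = (Y ^ q - Y) * X₀ := by
        apply mul_left_cancel₀ two_ne
        linear_combination hST
      rw [hl]
      field_simp
      linear_combination -hkey
    · rintro ⟨l, hl, rfl⟩
      have hl0 : l ≠ 0 := by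
        intro h; rw [h, zero_pow hd0.ne'] at hl; exact zero_ne_one hl
      have hln : l ^ n = 1 := by
        obtain ⟨k, hk⟩ := Nat.gcd_dvd_left n (q - 1)
        rw [hk, pow_mul, hl, one_pow]
      have hlq1 : l ^ (q - 1) = 1 := by
        obtain ⟨k, hk⟩ := Nat.gcd_dvd_right n (q - 1)
        rw [hk, pow_mul, hl, one_pow]
      have hlq : l ^ q = l := by
        rw [show q = q - 1 + 1 by omega, pow_succ, hlq1, one_mul]
      have hlfrob : (l * X₀) ^ q = l * X₀ ^ q := by rw [mul_pow, hlq]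
      rw [hf, hlfrob]
      have hlpow : l * l ^ (n - 1) = 1 := by rw [← pow_succ', hn1, hln]
      calc (c * (l * X₀ ^ q) + a * (l * X₀)) * (l * X₀ ^ q - l * X₀) ^ (n - 1)
          = (l * l ^ (n - 1)) * ((c * X₀ ^ q + a * X₀) * (X₀ ^ q - X₀) ^ (n - 1)) := by
            rw [show l * X₀ ^ q - l * X₀ = l * (X₀ ^ q - X₀) by ring, mul_pow]; ring
        _ = α := by rw [hlpow, one_mul, ← hf, hfX₀]
  -- counting
  rw [hset, Set.ncard_image_of_injective _ (mul_left_injective₀ hX₀ne)]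
  -- d divides the order of Fˣ
  have hqsq : (q - 1) * (q + 1) = q ^ 2 - 1 := by
    zify [hq1, Nat.one_le_pow 2 q (by omega)]; ring
  have hdvd : d ∣ Nat.card Fˣ := by
    rw [Nat.card_units, Nat.card_eq_fintype_card, hF, ← hqsq]
    exact dvd_mul_of_dvd_left (Nat.gcd_dvd_right n (q - 1)) _
  obtain ⟨g, hg⟩ := IsCyclic.exists_ofOrder_eq_natCard (α := Fˣ)
  obtain ⟨k, hk⟩ := hdvd
  have hk0 : 0 < k := by
    have hcpos : 0 < Nat.card Fˣ := Nat.card_pos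
    rcases Nat.eq_zero_or_pos k with h | h
    · rw [h, mul_zero] at hk; omega
    · exact h
  have hdivaux : Nat.card Fˣ / Nat.gcd (Nat.card Fˣ) k = d := by
    rw [hk, Nat.gcd_eq_right ⟨d, mul_comm d k⟩, Nat.mul_div_cancel _ hk0]
  have hζord : orderOf (g ^ k) = d := by
    rw [orderOf_pow, hg]
    exact hdivaux
  have hprim : IsPrimitiveRoot ((g ^ k : Fˣ) : F) d := by
    rw [IsPrimitiveRoot.coe_units_iff]
    exact hζord ▸ IsPrimitiveRoot.orderOf (g ^ k)
  have hsetroots : {l : F | l ^ d = 1} = ↑(Polynomial.nthRootsFinset d (1 : F)) := by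
    ext x
    simp [Polynomial.mem_nthRootsFinset hd0 (1 : F)]
  rw [hsetroots, Set.ncard_coe_finset, hprim.card_nthRootsFinset]
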